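/- Let 0 < r1 ≤ r2 ≤ r3, let n be an integer with 2 ≤ n ≤ 4, and let Ω be an isoperimetric region in T^3 × R^n. If η_m = 0, then I_{S^1_{r1}×S^1_{r2}×R^{n+1}}(V^{n+3}(Ω)) ≤ V^{n+2}(∂Ω). -/

import Mathlib

open MeasureTheory Real ENNReal NNReal

noncomputable section

/-- The flat circle of radius `r` (circumference `2πr`), i.e. `ℝ / (2πr)ℤ`
with the quotient (arc-length) metric. -/
abbrev Circ (r : ℝ) : Type := AddCircle (2 * Real.pi * r)

/-- `d`-dimensional Hausdorff (Riemannian) measure of a subset of a metric space. -/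
noncomputable def haus (X : Type*) [EMetricSpace X] (d : ℕ) (s : Set X) : ℝ≥0∞ :=
  letI : MeasurableSpace X := borel X
  haveI : BorelSpace X := ⟨rfl⟩
  (MeasureTheory.Measure.hausdorffMeasure (d : ℝ) : Measure X) s

/-- A closed region is the closure of an open set. -/
def IsClosedRegion {X : Type*} [TopologicalSpace X] (U : Set X) : Prop :=
  ∃ V : Set X, IsOpen V ∧ U = closure V

/-- The isoperimetric profile of an `m`-dimensional space `X`:
the infimum of the `(m-1)`-dimensional boundary measures of closed regions
of `m`-dimensional measure `v`. -/
noncomputable def isoProfile (X : Type*) [EMetricSpace X] (m : ℕ) (v : ℝ≥0∞) : ℝ≥0∞ :=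
  ⨅ (U : Set X) (_ : IsClosedRegion U ∧ haus X m U = v), haus X (m - 1) (frontier U)

/-- An isoperimetric region in the `m`-dimensional space `X`. -/
def IsIsoRegion (X : Type*) [EMetricSpace X] (m : ℕ) (Ω : Set X) : Prop :=
  IsClosedRegion Ω ∧ haus X (m - 1) (frontier Ω) = isoProfile X m (haus X m Ω)

/-- Euclidean `n`-space. -/
abbrev EucSp (n : ℕ) : Type := EuclideanSpace ℝ (Fin n)

/-- The Riemannian product `S¹_r × ℝ^m` (with the `ℓ²` product metric). -/
abbrev S1R (r : ℝ) (m : ℕ) : Type := WithLp 2 (Circ r × EucSp m)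

/-- The Riemannian product `S¹_{r1} × S¹_{r2} × ℝ^n = T² × ℝ^n`. -/
abbrev T2R (r1 r2 : ℝ) (n : ℕ) : Type := WithLp 2 (Circ r1 × S1R r2 n)

/-- first circle coordinate of a point of `T² × ℝ^n` -/
def t2fst {r1 r2 : ℝ} {n : ℕ} (p : T2R r1 r2 n) : Circ r1 :=
  (WithLp.equiv 2 (Circ r1 × S1R r2 n) p).1

/-- second circle coordinate of a point of `T² × ℝ^n` -/
def t2snd {r1 r2 : ℝ} {n : ℕ} (p : T2R r1 r2 n) : Circ r2 :=
  (WithLp.equiv 2 (Circ r2 × EucSp n) ((WithLp.equiv 2 (Circ r1 × S1R r2 n) p).2)).1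

/-- Euclidean coordinate of a point of `T² × ℝ^n` -/
def t2euc {r1 r2 : ℝ} {n : ℕ} (p : T2R r1 r2 n) : EucSp n :=
  (WithLp.equiv 2 (Circ r2 × EucSp n) ((WithLp.equiv 2 (Circ r1 × S1R r2 n) p).2)).2

/-- `ω_n`, the `n`-dimensional volume of the unit round sphere `Sⁿ ⊂ ℝ^{n+1}`. -/
noncomputable def omegaS (n : ℕ) : ℝ :=
  (haus (EucSp (n+1)) n (Metric.sphere (0 : EucSp (n+1)) 1)).toReal

/-- `β_n(r) = n^{(n-1)(n+1)} (2πr ω_{n-1})^{n+1} (1+n)^{-n²} ω_n^{-n}`. -/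
noncomputable def betaC (n : ℕ) (r : ℝ) : ℝ :=
  (n : ℝ) ^ ((n-1)*(n+1)) * (2 * Real.pi * r * omegaS (n-1)) ^ (n+1) *
    ((1 + (n : ℝ)) ^ (n^2))⁻¹ * ((omegaS n) ^ n)⁻¹

/-- The isoperimetric profile of `ℝ^m`: `I_{ℝ^m}(v) = m^{(m-1)/m} ω_{m-1}^{1/m} v^{(m-1)/m}`. -/
noncomputable def eucProfile (m : ℕ) (v : ℝ) : ℝ :=
  (m : ℝ) ^ (((m : ℝ) - 1)/m) * omegaS (m-1) ^ ((1 : ℝ)/m) * v ^ (((m : ℝ) - 1)/m)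

/-- The region `S¹_{r1} × S¹_{r2} × B^n_R` in `T² × ℝ^n`. -/
def tball (r1 r2 : ℝ) (n : ℕ) (R : ℝ) : Set (T2R r1 r2 n) :=
  {p | ‖t2euc p‖ ≤ R}

/-- `f_n(v) = V^{n+1}(∂(S¹_{r1} × S¹_{r2} × B^n_R))`, where `R > 0` is such that
`V^{n+2}(S¹_{r1} × S¹_{r2} × B^n_R) = v`. -/
noncomputable def fA (r1 r2 : ℝ) (n : ℕ) (v : ℝ≥0∞) : ℝ≥0∞ :=
  ⨅ (R : ℝ) (_ : 0 < R ∧ haus (T2R r1 r2 n) (n+2) (tball r1 r2 n R) = v),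
    haus (T2R r1 r2 n) (n+1) (frontier (tball r1 r2 n R))

/-- The slice function `F₁(t) = V^{n+1}(Ω ∩ ({t} × S¹_{r2} × ℝ^n))`. -/
noncomputable def sliceF1 {r1 r2 : ℝ} {n : ℕ} (Ω : Set (T2R r1 r2 n)) (t : Circ r1) : ℝ≥0∞ :=
  haus (T2R r1 r2 n) (n+1) (Ω ∩ {p | t2fst p = t})

/-- The slice function `F₂(s) = V^{n+1}(Ω ∩ (S¹_{r1} × {s} × ℝ^n))`. -/
noncomputable def sliceF2 {r1 r2 : ℝ} {n : ℕ} (Ω : Set (T2R r1 r2 n)) (s : Circ r2) : ℝ≥0∞ :=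
  haus (T2R r1 r2 n) (n+1) (Ω ∩ {p | t2snd p = s})

/-- `θ_m`, the minimum (infimum) of the slice function `F₁`. -/
noncomputable def thetaMin {r1 r2 : ℝ} {n : ℕ} (Ω : Set (T2R r1 r2 n)) : ℝ≥0∞ :=
  ⨅ t : Circ r1, sliceF1 Ω t

/-- `θ_M`, the maximum (supremum) of the slice function `F₁`. -/
noncomputable def thetaMax {r1 r2 : ℝ} {n : ℕ} (Ω : Set (T2R r1 r2 n)) : ℝ≥0∞ :=
  ⨆ t : Circ r1, sliceF1 Ω t

/-- `σ_m`, the minimum (infimum) of the slice function `F₂`. -/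
noncomputable def sigmaMin {r1 r2 : ℝ} {n : ℕ} (Ω : Set (T2R r1 r2 n)) : ℝ≥0∞ :=
  ⨅ s : Circ r2, sliceF2 Ω s

/-- `σ_M`, the maximum (supremum) of the slice function `F₂`. -/
noncomputable def sigmaMax {r1 r2 : ℝ} {n : ℕ} (Ω : Set (T2R r1 r2 n)) : ℝ≥0∞ :=
  ⨆ s : Circ r2, sliceF2 Ω s

/-- The region `S¹_r × B^m_R` in `S¹_r × ℝ^m`. -/
def s1ball (r : ℝ) (m : ℕ) (R : ℝ) : Set (S1R r m) :=
  {p | ‖(WithLp.equiv 2 (Circ r × EucSp m) p).2‖ ≤ R}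
/-- The Riemannian product `S¹_{r1} × S¹_{r2} × S¹_{r3} × ℝ^n = T³ × ℝ^n`. -/
abbrev T3R (r1 r2 r3 : ℝ) (n : ℕ) : Type :=
  WithLp 2 (Circ r1 × WithLp 2 (Circ r2 × S1R r3 n))

/-- third circle coordinate of a point of `T³ × ℝ^n` -/
def t3trd {r1 r2 r3 : ℝ} {n : ℕ} (p : T3R r1 r2 r3 n) : Circ r3 :=
  (WithLp.equiv 2 (Circ r3 × EucSp n)
    ((WithLp.equiv 2 (Circ r2 × S1R r3 n)
      ((WithLp.equiv 2 (Circ r1 × WithLp 2 (Circ r2 × S1R r3 n)) p).2)).2)).1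

/-- Euclidean coordinate of a point of `T³ × ℝ^n` -/
def t3euc {r1 r2 r3 : ℝ} {n : ℕ} (p : T3R r1 r2 r3 n) : EucSp n :=
  (WithLp.equiv 2 (Circ r3 × EucSp n)
    ((WithLp.equiv 2 (Circ r2 × S1R r3 n)
      ((WithLp.equiv 2 (Circ r1 × WithLp 2 (Circ r2 × S1R r3 n)) p).2)).2)).2

/-- The region `T³ × B^n_R` in `T³ × ℝ^n`. -/
def t3ball (r1 r2 r3 : ℝ) (n : ℕ) (R : ℝ) : Set (T3R r1 r2 r3 n) :=
  {p | ‖t3euc p‖ ≤ R}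

/-- `g_n(v) = V^{n+2}(∂(T³ × B^n_R))`, where `R > 0` is such that
`V^{n+3}(T³ × B^n_R) = v`. -/
noncomputable def gA (r1 r2 r3 : ℝ) (n : ℕ) (v : ℝ≥0∞) : ℝ≥0∞ :=
  ⨅ (R : ℝ) (_ : 0 < R ∧ haus (T3R r1 r2 r3 n) (n+3) (t3ball r1 r2 r3 n R) = v),
    haus (T3R r1 r2 r3 n) (n+2) (frontier (t3ball r1 r2 r3 n R))

/-- The slice function `F(t) = V^{n+2}(Ω ∩ (S¹_{r1} × S¹_{r2} × {t} × ℝ^n))`. -/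
noncomputable def sliceF3 {r1 r2 r3 : ℝ} {n : ℕ} (Ω : Set (T3R r1 r2 r3 n))
    (t : Circ r3) : ℝ≥0∞ :=
  haus (T3R r1 r2 r3 n) (n+2) (Ω ∩ {p | t3trd p = t})

/-- `η_m`, the minimum (infimum) of the slice function `F`. -/
noncomputable def etaMin {r1 r2 r3 : ℝ} {n : ℕ} (Ω : Set (T3R r1 r2 r3 n)) : ℝ≥0∞ :=
  ⨅ t : Circ r3, sliceF3 Ω t

/-- `η_M`, the maximum (supremum) of the slice function `F`. -/
noncomputable def etaMax {r1 r2 r3 : ℝ} {n : ℕ} (Ω : Set (T3R r1 r2 r3 n)) : ℝ≥0∞ :=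
  ⨆ t : Circ r3, sliceF3 Ω t
namespace T3Cut

variable {r1 r2 r3 : ℝ} {n : ℕ}

/-- The unrolling covering map `T² × ℝ^{n+1} → T³ × ℝⁿ`. -/
def pj (r1 r2 r3 : ℝ) (n : ℕ) (p : T2R r1 r2 (n+1)) : T3R r1 r2 r3 n :=
  WithLp.toLp 2 (p.fst, WithLp.toLp 2 (p.snd.fst, WithLp.toLp 2 ((↑(p.snd.snd 0) : Circ r3),
    WithLp.toLp 2 (Fin.tail p.snd.snd.ofLp))))

/-- the ℝ-coordinate that gets wrapped -/
def wc (p : T2R r1 r2 (n+1)) : ℝ := p.snd.snd 0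

/-- The canonical lift `Circ r3 → [a, a+L)`. -/
def lf (hr3 : 0 < r3) (a : ℝ) (z : Circ r3) : ℝ :=
  haveI : Fact (0 < 2 * Real.pi * r3) := ⟨by positivity⟩
  ((AddCircle.equivIco (2 * Real.pi * r3) a z : Set.Ico a (a + 2 * Real.pi * r3)) : ℝ)

/-- The inverse (local section) map `T³ × ℝⁿ → T² × ℝ^{n+1}` with lift based at `a`. -/
def rj (r1 r2 : ℝ) (hr3 : 0 < r3) (n : ℕ) (a : ℝ) (z : T3R r1 r2 r3 n) : T2R r1 r2 (n+1) :=
  WithLp.toLp 2 (z.fst, WithLp.toLp 2 (z.snd.fst,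
    WithLp.toLp 2 (Fin.cons (lf hr3 a z.snd.snd.fst) z.snd.snd.snd.ofLp : Fin (n+1) → ℝ)))

lemma lf_mem (hr3 : 0 < r3) (a : ℝ) (z : Circ r3) :
    lf hr3 a z ∈ Set.Ico a (a + 2 * Real.pi * r3) := by
  haveI : Fact (0 < 2 * Real.pi * r3) := ⟨by positivity⟩
  exact (AddCircle.equivIco (2 * Real.pi * r3) a z).2

lemma lf_coe (hr3 : 0 < r3) {a x : ℝ} (hx : x ∈ Set.Ico a (a + 2 * Real.pi * r3)) :
    lf hr3 a ((x : Circ r3)) = x := by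
  haveI : Fact (0 < 2 * Real.pi * r3) := ⟨by positivity⟩
  have : AddCircle.equivIco (2 * Real.pi * r3) a ↑x = ⟨x, hx⟩ := by
    rw [Equiv.apply_eq_iff_eq_symm_apply]; rfl
  simp only [lf, this]

lemma coe_lf (hr3 : 0 < r3) (a : ℝ) (z : Circ r3) : ((lf hr3 a z : ℝ) : Circ r3) = z := by
  haveI : Fact (0 < 2 * Real.pi * r3) := ⟨by positivity⟩
  exact (AddCircle.equivIco (2 * Real.pi * r3) a).symm_apply_apply z

lemma circ_edist_le (hr3 : 0 < r3) (x y : ℝ) :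
    edist ((x : Circ r3)) ((y : Circ r3)) ≤ edist x y := by
  rw [edist_dist, edist_dist]
  apply ENNReal.ofReal_le_ofReal
  have h1 : dist ((x : Circ r3)) ((y : Circ r3)) = ‖((x - y : ℝ) : Circ r3)‖ := by
    rw [dist_eq_norm]
    norm_cast
  rw [h1, Real.dist_eq]
  exact QuotientAddGroup.norm_mk_le_norm.trans_eq rfl

lemma circ_edist_eq (hr3 : 0 < r3) {x y : ℝ} (h : |x - y| ≤ 2 * Real.pi * r3 / 2) :
    edist ((x : Circ r3)) ((y : Circ r3)) = edist x y := by
  have hL : (0:ℝ) < 2 * Real.pi * r3 := by positivity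
  rw [edist_dist, edist_dist]
  congr 1
  have h1 : dist ((x : Circ r3)) ((y : Circ r3)) = ‖((x - y : ℝ) : Circ r3)‖ := by
    rw [dist_eq_norm]; norm_cast
  rw [h1, Real.dist_eq]
  refine (AddCircle.norm_coe_eq_abs_iff _ hL.ne').mpr ?_
  rwa [abs_of_pos hL]

end T3Cut
namespace T3Cut

lemma sq_half (x : ℝ≥0∞) : (x ^ (1/2:ℝ)) ^ (2:ℝ) = x := by
  rw [← ENNReal.rpow_mul]; norm_num

lemma half_sq (x : ℝ≥0∞) : (x ^ (2:ℝ)) ^ (1/2:ℝ) = x := by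
  rw [← ENNReal.rpow_mul]; norm_num

lemma two_toReal : (2 : ℝ≥0∞).toReal = (2:ℝ) := by norm_num

lemma edist_T2_sq (u v : T2R r1 r2 (n+1)) :
    edist u v ^ (2:ℝ) =
      edist u.fst v.fst ^ (2:ℝ) + edist u.snd.fst v.snd.fst ^ (2:ℝ) +
        ∑ i : Fin (n+1), edist (u.snd.snd i) (v.snd.snd i) ^ (2:ℝ) := by
  rw [WithLp.prod_edist_eq_add (by norm_num), two_toReal, sq_half,
    WithLp.prod_edist_eq_add (by norm_num), two_toReal, sq_half,
    PiLp.edist_eq_sum (by norm_num), two_toReal, sq_half, add_assoc]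

lemma edist_T3_sq (z w : T3R r1 r2 r3 n) :
    edist z w ^ (2:ℝ) =
      edist z.fst w.fst ^ (2:ℝ) + edist z.snd.fst w.snd.fst ^ (2:ℝ) +
        (edist z.snd.snd.fst w.snd.snd.fst ^ (2:ℝ) + ∑ i : Fin n, edist (z.snd.snd.snd i) (w.snd.snd.snd i) ^ (2:ℝ)) := by
  rw [WithLp.prod_edist_eq_add (by norm_num), two_toReal, sq_half,
    WithLp.prod_edist_eq_add (by norm_num), two_toReal, sq_half,
    WithLp.prod_edist_eq_add (by norm_num), two_toReal, sq_half,
    PiLp.edist_eq_sum (by norm_num), two_toReal, sq_half, add_assoc]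

lemma pj_edist_sq (u v : T2R r1 r2 (n+1)) :
    edist (pj r1 r2 r3 n u) (pj r1 r2 r3 n v) ^ (2:ℝ) =
      edist u.fst v.fst ^ (2:ℝ) + edist u.snd.fst v.snd.fst ^ (2:ℝ) +
        (edist ((wc u : ℝ) : Circ r3) ((wc v : ℝ) : Circ r3) ^ (2:ℝ) +
          ∑ i : Fin n, edist (u.snd.snd i.succ) (v.snd.snd i.succ) ^ (2:ℝ)) := by
  rw [edist_T3_sq]; rfl

lemma edist_T2_sq' (u v : T2R r1 r2 (n+1)) :
    edist u v ^ (2:ℝ) =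
      edist u.fst v.fst ^ (2:ℝ) + edist u.snd.fst v.snd.fst ^ (2:ℝ) +
        (edist (wc u) (wc v) ^ (2:ℝ) +
          ∑ i : Fin n, edist (u.snd.snd i.succ) (v.snd.snd i.succ) ^ (2:ℝ)) := by
  rw [edist_T2_sq, Fin.sum_univ_succ]; rfl

lemma edist_of_sq {a b : ℝ≥0∞} (h : a ^ (2:ℝ) ≤ b ^ (2:ℝ)) : a ≤ b := by
  have := ENNReal.rpow_le_rpow h (by norm_num : (0:ℝ) ≤ 1/2)
  rwa [half_sq, half_sq] at this

lemma edist_of_sq_eq {a b : ℝ≥0∞} (h : a ^ (2:ℝ) = b ^ (2:ℝ)) : a = b := by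
  calc a = (a ^ (2:ℝ)) ^ (1/2:ℝ) := (half_sq a).symm
    _ = (b ^ (2:ℝ)) ^ (1/2:ℝ) := by rw [h]
    _ = b := half_sq b

lemma pj_lipschitz (hr3 : 0 < r3) : LipschitzWith 1 (pj r1 r2 r3 n) := by
  intro u v
  rw [ENNReal.coe_one, one_mul]
  refine edist_of_sq ?_
  rw [pj_edist_sq, edist_T2_sq']
  gcongr
  exact circ_edist_le hr3 _ _

lemma pj_isometryOn (hr3 : 0 < r3) {a : ℝ} {u v : T2R r1 r2 (n+1)}
    (hu : wc u ∈ Set.Ico a (a + 2 * Real.pi * r3 / 2))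
    (hv : wc v ∈ Set.Ico a (a + 2 * Real.pi * r3 / 2)) :
    edist (pj r1 r2 r3 n u) (pj r1 r2 r3 n v) = edist u v := by
  refine edist_of_sq_eq ?_
  rw [pj_edist_sq, edist_T2_sq']
  have h : |wc u - wc v| ≤ 2 * Real.pi * r3 / 2 := by
    rw [abs_sub_le_iff]
    constructor <;> [skip; skip] <;> linarith [hu.1, hu.2, hv.1, hv.2]
  rw [circ_edist_eq hr3 h]

lemma rj_pj (hr3 : 0 < r3) {a : ℝ} {u : T2R r1 r2 (n+1)}
    (hu : wc u ∈ Set.Ico a (a + 2 * Real.pi * r3)) :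
    rj r1 r2 hr3 n a (pj r1 r2 r3 n u) = u := by
  have h3 : Fin.cons (lf hr3 a ((wc u : ℝ) : Circ r3)) (Fin.tail u.snd.snd.ofLp) = u.snd.snd.ofLp := by
    rw [lf_coe hr3 hu]
    exact Fin.cons_self_tail u.snd.snd.ofLp
  show WithLp.toLp 2 (u.fst, WithLp.toLp 2 (u.snd.fst, WithLp.toLp 2 (Fin.cons (lf hr3 a ((wc u : ℝ) : Circ r3)) (Fin.tail u.snd.snd.ofLp) : Fin (n+1) → ℝ))) = u
  rw [h3]; rfl

end T3Cut
namespace T3Cut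

lemma cont_wc : Continuous (wc : T2R r1 r2 (n+1) → ℝ) := by
  have h1 : Continuous fun p : T2R r1 r2 (n+1) => p.snd :=
    WithLp.continuous_snd ..
  have h2 : Continuous fun p : T2R r1 r2 (n+1) => p.snd.snd :=
    (WithLp.continuous_snd ..).comp h1
  exact ((continuous_apply (0 : Fin (n+1))).comp
    ((PiLp.continuous_ofLp ..).comp h2))

lemma cont_c3 : Continuous fun z : T3R r1 r2 r3 n => z.snd.snd.fst := by
  have h1 : Continuous fun z : T3R r1 r2 r3 n => z.snd :=
    WithLp.continuous_snd ..
  have h2 : Continuous fun z : T3R r1 r2 r3 n => z.snd.snd :=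
    (WithLp.continuous_snd ..).comp h1
  exact (WithLp.continuous_fst ..).comp h2

lemma cons0 (x : ℝ) (y : EucSp n) : (Fin.cons x y : ∀ _ : Fin (n+1), ℝ) 0 = x := rfl

lemma tailcons (x : ℝ) (y : EucSp n) :
    Fin.tail (Fin.cons x y : ∀ _ : Fin (n+1), ℝ) = fun i => y i := rfl

lemma strip_meas (hr3 : 0 < r3) (d : ℕ) (a : ℝ) (A : Set (T3R r1 r2 r3 n)) :
    haus (T2R r1 r2 (n+1)) d
        (pj r1 r2 r3 n ⁻¹' A ∩ {p | wc p ∈ Set.Ico a (a + 2 * Real.pi * r3 / 2)}) =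
      haus (T3R r1 r2 r3 n) d
        (A ∩ {z | z.snd.snd.fst ∈ ((fun x : ℝ => (x : Circ r3)) ''
          Set.Ico a (a + 2 * Real.pi * r3 / 2))}) := by
  letI : MeasurableSpace (T2R r1 r2 (n+1)) := borel _
  haveI : BorelSpace (T2R r1 r2 (n+1)) := ⟨rfl⟩
  letI : MeasurableSpace (T3R r1 r2 r3 n) := borel _
  haveI : BorelSpace (T3R r1 r2 r3 n) := ⟨rfl⟩
  set P : Set (T2R r1 r2 (n+1)) :=
    pj r1 r2 r3 n ⁻¹' A ∩ {p | wc p ∈ Set.Ico a (a + 2 * Real.pi * r3 / 2)} with hP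
  have himg : pj r1 r2 r3 n '' P =
      A ∩ {z | z.snd.snd.fst ∈ ((fun x : ℝ => (x : Circ r3)) ''
        Set.Ico a (a + 2 * Real.pi * r3 / 2))} := by
    ext z
    constructor
    · rintro ⟨u, ⟨huA, hus⟩, rfl⟩
      exact ⟨huA, ⟨wc u, hus, rfl⟩⟩
    · rintro ⟨hzA, x, hx, hxz⟩
      refine ⟨WithLp.toLp 2 (z.fst, WithLp.toLp 2 (z.snd.fst, WithLp.toLp 2 (Fin.cons x z.snd.snd.snd.ofLp : Fin (n+1) → ℝ))), ?_, ?_⟩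
      · have hw : wc (WithLp.toLp 2 (z.fst, WithLp.toLp 2 (z.snd.fst, WithLp.toLp 2 (Fin.cons x z.snd.snd.snd.ofLp : Fin (n+1) → ℝ))) : T2R r1 r2 (n+1)) = x :=
          rfl
        have hpj : pj r1 r2 r3 n (WithLp.toLp 2 (z.fst, WithLp.toLp 2 (z.snd.fst, WithLp.toLp 2 (Fin.cons x z.snd.snd.snd.ofLp : Fin (n+1) → ℝ))) : T2R r1 r2 (n+1)) = z := by
          show WithLp.toLp 2 (z.fst, WithLp.toLp 2 (z.snd.fst, WithLp.toLp 2 (((x : ℝ) : Circ r3), WithLp.toLp 2 (Fin.tail (Fin.cons x z.snd.snd.snd.ofLp : Fin (n+1) → ℝ))))) = z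
          rw [show ((x : ℝ) : Circ r3) = z.snd.snd.fst from hxz]; rfl
        constructor
        · show pj r1 r2 r3 n _ ∈ A
          rw [hpj]; exact hzA
        · show wc _ ∈ Set.Ico a (a + 2 * Real.pi * r3 / 2)
          rw [hw]; exact hx
      · show WithLp.toLp 2 (z.fst, WithLp.toLp 2 (z.snd.fst, WithLp.toLp 2 (((x : ℝ) : Circ r3), WithLp.toLp 2 (Fin.tail (Fin.cons x z.snd.snd.snd.ofLp : Fin (n+1) → ℝ))))) = z
        rw [show ((x : ℝ) : Circ r3) = z.snd.snd.fst from hxz]; rfl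
  have hlip : LipschitzOnWith 1 (pj r1 r2 r3 n) P := by
    intro u hu v hv
    rw [ENNReal.coe_one, one_mul]
    exact le_of_eq (pj_isometryOn hr3 hu.2 hv.2)
  have hPsub : ∀ u ∈ P, wc u ∈ Set.Ico a (a + 2 * Real.pi * r3) := by
    intro u hu
    have hpi : (0:ℝ) < 2 * Real.pi * r3 := by positivity
    exact ⟨hu.2.1, by linarith [hu.2.2]⟩
  have hrj : ∀ u ∈ P, rj r1 r2 hr3 n a (pj r1 r2 r3 n u) = u := fun u hu =>
    rj_pj hr3 (hPsub u hu)
  have hlip2 : LipschitzOnWith 1 (rj r1 r2 hr3 n a) (pj r1 r2 r3 n '' P) := by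
    rintro _ ⟨u, hu, rfl⟩ _ ⟨v, hv, rfl⟩
    rw [ENNReal.coe_one, one_mul, hrj u hu, hrj v hv, pj_isometryOn hr3 hu.2 hv.2]
  have himg2 : rj r1 r2 hr3 n a '' (pj r1 r2 r3 n '' P) = P := by
    rw [← Set.image_comp]
    have : Set.EqOn (rj r1 r2 hr3 n a ∘ pj r1 r2 r3 n) id P := fun u hu => hrj u hu
    rw [Set.image_congr this, Set.image_id]
  have le1 := hlip.hausdorffMeasure_image_le (d := (d:ℝ)) (Nat.cast_nonneg d)
  have le2 := hlip2.hausdorffMeasure_image_le (d := (d:ℝ)) (Nat.cast_nonneg d)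
  rw [himg] at le1
  rw [himg2, himg] at le2
  simp only [ENNReal.coe_one, ENNReal.one_rpow, one_mul] at le1 le2
  exact le_antisymm le2 le1

end T3Cut
namespace T3Cut

lemma haus_def (X : Type*) [EMetricSpace X] (d : ℕ) :
    ∀ s : Set X, haus X d s =
      (letI : MeasurableSpace X := borel X
       haveI : BorelSpace X := ⟨rfl⟩
       (MeasureTheory.Measure.hausdorffMeasure (d : ℝ) : Measure X) s) :=
  fun _ => rfl

lemma full_meas (hr3 : 0 < r3) (d : ℕ) (s : ℝ) (A : Set (T3R r1 r2 r3 n)) :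
    haus (T2R r1 r2 (n+1)) d
        (pj r1 r2 r3 n ⁻¹' A ∩ {p | wc p ∈ Set.Ico s (s + 2 * Real.pi * r3)}) =
      haus (T3R r1 r2 r3 n) d A := by
  have hpi : (0:ℝ) < 2 * Real.pi * r3 := by positivity
  haveI : Fact (0 < 2 * Real.pi * r3) := ⟨hpi⟩
  letI : MeasurableSpace (T2R r1 r2 (n+1)) := borel _
  haveI : BorelSpace (T2R r1 r2 (n+1)) := ⟨rfl⟩
  letI : MeasurableSpace (T3R r1 r2 r3 n) := borel _
  haveI : BorelSpace (T3R r1 r2 r3 n) := ⟨rfl⟩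
  have hmid : s + 2 * Real.pi * r3 / 2 + 2 * Real.pi * r3 / 2 = s + 2 * Real.pi * r3 := by
    ring
  -- the first half-strip upstairs is measurable
  have hM1 : MeasurableSet {p : T2R r1 r2 (n+1) |
      wc p ∈ Set.Ico s (s + 2 * Real.pi * r3 / 2)} :=
    cont_wc.measurable measurableSet_Ico
  -- the first arc downstairs is measurable
  have harcB : MeasurableSet {z : T3R r1 r2 r3 n |
      z.snd.snd.fst ∈ ((fun x : ℝ => (x : Circ r3)) '' Set.Ico s (s + 2 * Real.pi * r3 / 2))} := by
    apply (cont_c3 (r1 := r1) (r2 := r2)).measurable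
    have h1 : ((fun x : ℝ => (x : Circ r3)) '' Set.Ico s (s + 2 * Real.pi * r3 / 2)) =
        {((s : ℝ) : Circ r3)} ∪ ((fun x : ℝ => (x : Circ r3)) ''
          Set.Ioo s (s + 2 * Real.pi * r3 / 2)) := by
      rw [show Set.Ico s (s + 2 * Real.pi * r3 / 2) =
          insert s (Set.Ioo s (s + 2 * Real.pi * r3 / 2)) from
          (Set.Ioo_insert_left (by linarith)).symm,
        Set.image_insert_eq, Set.insert_eq]
    rw [h1]
    refine (isClosed_singleton.measurableSet).union ?_
    have ho : IsOpen ((fun x : ℝ => (x : Circ r3)) ''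
        Set.Ioo s (s + 2 * Real.pi * r3 / 2)) :=
      QuotientAddGroup.isOpenMap_coe _ isOpen_Ioo
    exact ho.measurableSet
  -- split the full strip upstairs
  have hsplit2 := measure_inter_add_diff
    (μ := (MeasureTheory.Measure.hausdorffMeasure (d : ℝ) : Measure (T2R r1 r2 (n+1))))
    (pj r1 r2 r3 n ⁻¹' A ∩ {p | wc p ∈ Set.Ico s (s + 2 * Real.pi * r3)}) hM1
  -- split A downstairs
  have hsplit3 := measure_inter_add_diff
    (μ := (MeasureTheory.Measure.hausdorffMeasure (d : ℝ) : Measure (T3R r1 r2 r3 n)))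
    A harcB
  -- identify the upstairs pieces
  have e1 : (pj r1 r2 r3 n ⁻¹' A ∩ {p | wc p ∈ Set.Ico s (s + 2 * Real.pi * r3)}) ∩
      {p : T2R r1 r2 (n+1) | wc p ∈ Set.Ico s (s + 2 * Real.pi * r3 / 2)} =
      pj r1 r2 r3 n ⁻¹' A ∩ {p | wc p ∈ Set.Ico s (s + 2 * Real.pi * r3 / 2)} := by
    ext p
    simp only [Set.mem_inter_iff, Set.mem_setOf_eq, Set.mem_Ico]
    constructor
    · rintro ⟨⟨hA, _⟩, h1⟩; exact ⟨hA, h1⟩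
    · rintro ⟨hA, h1⟩; exact ⟨⟨hA, h1.1, by linarith [h1.2]⟩, h1⟩
  have e2 : (pj r1 r2 r3 n ⁻¹' A ∩ {p | wc p ∈ Set.Ico s (s + 2 * Real.pi * r3)}) \
      {p : T2R r1 r2 (n+1) | wc p ∈ Set.Ico s (s + 2 * Real.pi * r3 / 2)} =
      pj r1 r2 r3 n ⁻¹' A ∩
        {p | wc p ∈ Set.Ico (s + 2 * Real.pi * r3 / 2)
          (s + 2 * Real.pi * r3 / 2 + 2 * Real.pi * r3 / 2)} := by
    rw [hmid]
    ext p
    simp only [Set.mem_diff, Set.mem_inter_iff, Set.mem_setOf_eq, Set.mem_Ico]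
    constructor
    · rintro ⟨⟨hA, h1, h2⟩, h3⟩
      refine ⟨hA, ?_, h2⟩
      by_contra hc
      exact h3 ⟨h1, by linarith [not_le.mp hc]⟩
    · rintro ⟨hA, h1, h2⟩
      exact ⟨⟨hA, by linarith, h2⟩, fun hc => by linarith [hc.2]⟩
  -- identify the downstairs pieces
  have e3 : A \ {z : T3R r1 r2 r3 n |
      z.snd.snd.fst ∈ ((fun x : ℝ => (x : Circ r3)) '' Set.Ico s (s + 2 * Real.pi * r3 / 2))} =
      A ∩ {z | z.snd.snd.fst ∈ ((fun x : ℝ => (x : Circ r3)) ''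
        Set.Ico (s + 2 * Real.pi * r3 / 2)
          (s + 2 * Real.pi * r3 / 2 + 2 * Real.pi * r3 / 2))} := by
    rw [hmid]
    ext z
    simp only [Set.mem_diff, Set.mem_inter_iff, Set.mem_setOf_eq]
    constructor
    · rintro ⟨hA, h1⟩
      refine ⟨hA, ?_⟩
      have hz : ((lf hr3 s z.snd.snd.fst : ℝ) : Circ r3) = z.snd.snd.fst := coe_lf hr3 s z.snd.snd.fst
      have hmem := lf_mem hr3 s z.snd.snd.fst
      rcases lt_or_ge (lf hr3 s z.snd.snd.fst) (s + 2 * Real.pi * r3 / 2) with hlt | hge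
      · exact absurd ⟨lf hr3 s z.snd.snd.fst, ⟨hmem.1, hlt⟩, hz⟩ h1
      · exact ⟨lf hr3 s z.snd.snd.fst, ⟨hge, hmem.2⟩, hz⟩
    · rintro ⟨hA, y, hy, hyz⟩
      refine ⟨hA, ?_⟩
      rintro ⟨x, hx, hxz⟩
      have hxy : (x : Circ r3) = (y : Circ r3) := hxz.trans hyz.symm
      have hx' : x ∈ Set.Ico s (s + 2 * Real.pi * r3) := ⟨hx.1, by linarith [hx.2]⟩
      have hy' : y ∈ Set.Ico s (s + 2 * Real.pi * r3) := ⟨by linarith [hy.1], hy.2⟩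
      have hcontra := (AddCircle.coe_eq_coe_iff_of_mem_Ico hx' hy').mp hxy
      have := hx.2
      have := hy.1
      linarith
  have k1 := strip_meas (r1 := r1) (r2 := r2) hr3 d s A
  have k2 := strip_meas (r1 := r1) (r2 := r2) hr3 d (s + 2 * Real.pi * r3 / 2) A
  rw [haus_def, haus_def] at k1 k2 ⊢
  rw [← hsplit2, ← hsplit3, e1, e2, e3, k1, k2]

lemma wall_le (hr3 : 0 < r3) (d : ℕ) (c : ℝ) (A : Set (T3R r1 r2 r3 n)) :
    haus (T2R r1 r2 (n+1)) d (pj r1 r2 r3 n ⁻¹' A ∩ {p | wc p = c}) ≤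
      haus (T3R r1 r2 r3 n) d A := by
  have hpi : (0:ℝ) < 2 * Real.pi * r3 := by positivity
  letI : MeasurableSpace (T2R r1 r2 (n+1)) := borel _
  haveI : BorelSpace (T2R r1 r2 (n+1)) := ⟨rfl⟩
  letI : MeasurableSpace (T3R r1 r2 r3 n) := borel _
  haveI : BorelSpace (T3R r1 r2 r3 n) := ⟨rfl⟩
  have k1 := strip_meas (r1 := r1) (r2 := r2) hr3 d c A
  have h1 : haus (T2R r1 r2 (n+1)) d (pj r1 r2 r3 n ⁻¹' A ∩ {p | wc p = c}) ≤
      haus (T2R r1 r2 (n+1)) d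
        (pj r1 r2 r3 n ⁻¹' A ∩ {p | wc p ∈ Set.Ico c (c + 2 * Real.pi * r3 / 2)}) := by
    rw [haus_def, haus_def]
    apply measure_mono
    intro p hp
    have hc : wc p = c := hp.2
    refine ⟨hp.1, ?_⟩
    show wc p ∈ Set.Ico c (c + 2 * Real.pi * r3 / 2)
    rw [hc]
    exact ⟨le_refl c, by linarith⟩
  refine h1.trans ?_
  rw [k1]
  rw [haus_def, haus_def]
  exact measure_mono Set.inter_subset_left

end T3Cut
namespace T3Cut

lemma haus_mono (X : Type*) [EMetricSpace X] (d : ℕ) {s t : Set X} (h : s ⊆ t) :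
    haus X d s ≤ haus X d t := by
  letI : MeasurableSpace X := borel X
  haveI : BorelSpace X := ⟨rfl⟩
  rw [haus_def, haus_def]
  exact measure_mono h

lemma haus_union_le (X : Type*) [EMetricSpace X] (d : ℕ) (s t : Set X) :
    haus X d (s ∪ t) ≤ haus X d s + haus X d t := by
  letI : MeasurableSpace X := borel X
  haveI : BorelSpace X := ⟨rfl⟩
  rw [haus_def, haus_def, haus_def]
  exact measure_union_le s t

lemma haus_zero_of_lt (X : Type*) [EMetricSpace X] {d₁ d₂ : ℕ} (h : d₁ < d₂) {s : Set X}
    (hs : haus X d₁ s ≠ ⊤) : haus X d₂ s = 0 := by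
  letI : MeasurableSpace X := borel X
  haveI : BorelSpace X := ⟨rfl⟩
  rw [haus_def] at hs ⊢
  rcases MeasureTheory.Measure.hausdorffMeasure_zero_or_top
    (show (d₁ : ℝ) < (d₂ : ℝ) from Nat.cast_lt.mpr h) s with h0 | htop
  · exact h0
  · exact absurd htop hs

end T3Cut

open T3Cut


/-- Lemma 7 of the paper.
Let `0 < r1 ≤ r2 ≤ r3`, `2 ≤ n ≤ 4`, and let `Ω` be an isoperimetric region in
`T³ × ℝⁿ`.  If `η_m = 0`, then
`I_{S¹_{r1}×S¹_{r2}×ℝ^{n+1}}(V^{n+3}(Ω)) ≤ V^{n+2}(∂Ω)`. -/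
theorem t3_slice_min_zero (r1 r2 r3 : ℝ) (hr1 : 0 < r1) (hr12 : r1 ≤ r2)
    (hr23 : r2 ≤ r3) (n : ℕ) (hn2 : 2 ≤ n) (hn4 : n ≤ 4)
    (Ω : Set (T3R r1 r2 r3 n)) (hΩ : IsIsoRegion (T3R r1 r2 r3 n) (n+3) Ω)
    (h : etaMin Ω = 0) :
    isoProfile (T2R r1 r2 (n+1)) (n+3) (haus (T3R r1 r2 r3 n) (n+3) Ω)
      ≤ haus (T3R r1 r2 r3 n) (n+2) (frontier Ω) := by
  have hr3 : 0 < r3 := hr1.trans_le (hr12.trans hr23)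
  have hpi : (0:ℝ) < 2 * Real.pi * r3 := by positivity
  -- Ω is a closed region, WLOG the closure of its interior
  obtain ⟨V₀, hV₀open, hV₀⟩ := hΩ.1
  have hΩclosed : IsClosed Ω := by rw [hV₀]; exact isClosed_closure
  have hΩV : Ω = closure (interior Ω) := by
    apply subset_antisymm
    · rw [hV₀]
      apply closure_mono
      rw [hV₀open.subset_interior_iff]
      exact subset_closure
    · exact closure_minimal interior_subset hΩclosed
  have hfrΩ : frontier Ω = Ω \ interior Ω := hΩclosed.frontier_eq
  -- abbreviations
  set B := haus (T3R r1 r2 r3 n) (n+2) (frontier Ω) with hBdef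
  set v := haus (T3R r1 r2 r3 n) (n+3) Ω with hvdef
  apply ENNReal.le_of_forall_pos_le_add
  intro ε hε hBlt
  -- the third of ε
  set δ : ℝ≥0∞ := ((ε / 3 : ℝ≥0) : ℝ≥0∞) with hδdef
  have hδpos : (0:ℝ≥0∞) < δ := by
    rw [hδdef]
    exact_mod_cast (by positivity : (0:ℝ≥0) < ε / 3)
  have hδne : δ ≠ ⊤ := ENNReal.coe_ne_top
  have hδ3 : δ + δ + δ = (ε : ℝ≥0∞) := by
    rw [hδdef, ← ENNReal.coe_add, ← ENNReal.coe_add]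
    congr 1
    have h3 : (3:ℝ≥0) ≠ 0 := by norm_num
    field_simp
    ring
  -- choose a slice of measure < δ
  have hlt : (⨅ tt : Circ r3, sliceF3 Ω tt) < δ := by
    rw [show (⨅ tt : Circ r3, sliceF3 Ω tt) = etaMin Ω from rfl, h]
    exact hδpos
  obtain ⟨t, hFt⟩ := iInf_lt_iff.mp hlt
  -- lift of the slice point
  set s : ℝ := lf hr3 0 t with hsdef
  have hst : ((s : ℝ) : Circ r3) = t := coe_lf hr3 0 t
  have hslice : haus (T3R r1 r2 r3 n) (n+2) (Ω ∩ {z | z.snd.snd.fst = t}) < δ := hFt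
  have hslice_ne : haus (T3R r1 r2 r3 n) (n+2) (Ω ∩ {z | z.snd.snd.fst = t}) ≠ ⊤ :=
    (hslice.trans_le le_top).ne
  have hslice0 : haus (T3R r1 r2 r3 n) (n+3) (Ω ∩ {z | z.snd.snd.fst = t}) = 0 :=
    haus_zero_of_lt _ (by omega) hslice_ne
  have hfr0 : haus (T3R r1 r2 r3 n) (n+3) (frontier Ω) = 0 :=
    haus_zero_of_lt _ (by omega) hBlt.ne
  -- the cut region
  set V : Set (T3R r1 r2 r3 n) := interior Ω with hVdef
  set U : Set (T2R r1 r2 (n+1)) :=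
    closure (pj r1 r2 r3 n ⁻¹' V ∩
      {p | wc p ∈ Set.Ioo s (s + 2 * Real.pi * r3)}) with hUdef
  have hpjcont : Continuous (pj r1 r2 r3 n : T2R r1 r2 (n+1) → T3R r1 r2 r3 n) :=
    (pj_lipschitz hr3).continuous
  have hUregion : IsClosedRegion U :=
    ⟨_, ((hpjcont.isOpen_preimage _ isOpen_interior).inter
      (cont_wc.isOpen_preimage _ isOpen_Ioo)), rfl⟩
  -- U sits inside the closed strip over Ω
  have hUsub : U ⊆ pj r1 r2 r3 n ⁻¹' Ω ∩
      {p | wc p ∈ Set.Icc s (s + 2 * Real.pi * r3)} := by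
    apply closure_minimal
    · exact Set.inter_subset_inter (Set.preimage_mono interior_subset)
        (fun p hp => Set.Ioo_subset_Icc_self hp)
    · exact (hΩclosed.preimage hpjcont).inter (isClosed_Icc.preimage cont_wc)
  -- wall inclusions
  have hwall : ∀ c : ℝ, ((c : Circ r3) = t) →
      ∀ (A : Set (T3R r1 r2 r3 n)), A ⊆ Ω →
      pj r1 r2 r3 n ⁻¹' A ∩ {p | wc p = c} ⊆
        pj r1 r2 r3 n ⁻¹' (Ω ∩ {z | z.snd.snd.fst = t}) ∩ {p | wc p = c} := by
    intro c hc A hA p hp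
    have hwc : wc p = c := hp.2
    refine ⟨⟨hA hp.1, ?_⟩, hp.2⟩
    show ((wc p : ℝ) : Circ r3) = t
    rw [hwc, hc]
  have hsLt : ((s + 2 * Real.pi * r3 : ℝ) : Circ r3) = t := by
    rw [AddCircle.coe_add_period, hst]
  -- wall measure bounds
  have hwall_le : ∀ (d : ℕ) (c : ℝ), ((c : Circ r3) = t) →
      ∀ (A : Set (T3R r1 r2 r3 n)), A ⊆ Ω →
      haus (T2R r1 r2 (n+1)) d (pj r1 r2 r3 n ⁻¹' A ∩ {p | wc p = c}) ≤
        haus (T3R r1 r2 r3 n) d (Ω ∩ {z | z.snd.snd.fst = t}) := by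
    intro d c hc A hA
    refine (haus_mono _ d (hwall c hc A hA)).trans ?_
    exact wall_le hr3 d c _
  -- volume of U equals v : upper bound
  have hUvol_le : haus (T2R r1 r2 (n+1)) (n+3) U ≤ v := by
    have h1 : haus (T2R r1 r2 (n+1)) (n+3) U ≤
        haus (T2R r1 r2 (n+1)) (n+3) ((pj r1 r2 r3 n ⁻¹' Ω ∩
          {p | wc p ∈ Set.Ico s (s + 2 * Real.pi * r3)}) ∪
          (pj r1 r2 r3 n ⁻¹' Ω ∩ {p | wc p = s + 2 * Real.pi * r3})) := by
      apply haus_mono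
      intro p hp
      obtain ⟨h1, h2⟩ := hUsub hp
      have h2' : wc p ∈ Set.Icc s (s + 2 * Real.pi * r3) := h2
      rcases eq_or_lt_of_le h2'.2 with heq | hlt'
      · exact Or.inr ⟨h1, heq⟩
      · exact Or.inl ⟨h1, h2'.1, hlt'⟩
    refine h1.trans ((haus_union_le _ _ _ _).trans ?_)
    rw [full_meas hr3 (n+3) s Ω]
    have h2 : haus (T2R r1 r2 (n+1)) (n+3)
        (pj r1 r2 r3 n ⁻¹' Ω ∩ {p | wc p = s + 2 * Real.pi * r3}) ≤
        haus (T3R r1 r2 r3 n) (n+3) (Ω ∩ {z | z.snd.snd.fst = t}) :=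
      hwall_le (n+3) _ hsLt Ω le_rfl
    rw [hslice0] at h2
    rw [← hvdef]
    calc v + haus (T2R r1 r2 (n+1)) (n+3)
          (pj r1 r2 r3 n ⁻¹' Ω ∩ {p | wc p = s + 2 * Real.pi * r3})
        ≤ v + 0 := add_le_add le_rfl h2
      _ = v := add_zero v
  -- volume of U equals v : lower bound
  have hUvol_ge : v ≤ haus (T2R r1 r2 (n+1)) (n+3) U := by
    have hv1 : v ≤ haus (T3R r1 r2 r3 n) (n+3) V := by
      have hsub : Ω ⊆ V ∪ frontier Ω := by
        intro z hz
        by_cases hzV : z ∈ V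
        · exact Or.inl hzV
        · exact Or.inr (by rw [hfrΩ]; exact ⟨hz, hzV⟩)
      calc v = haus (T3R r1 r2 r3 n) (n+3) Ω := hvdef
        _ ≤ haus (T3R r1 r2 r3 n) (n+3) (V ∪ frontier Ω) := haus_mono _ _ hsub
        _ ≤ haus (T3R r1 r2 r3 n) (n+3) V + haus (T3R r1 r2 r3 n) (n+3) (frontier Ω) :=
            haus_union_le _ _ _ _
        _ = haus (T3R r1 r2 r3 n) (n+3) V + 0 := by rw [hfr0]
        _ = haus (T3R r1 r2 r3 n) (n+3) V := add_zero _
    have hv2 : haus (T3R r1 r2 r3 n) (n+3) V ≤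
        haus (T2R r1 r2 (n+1)) (n+3) (pj r1 r2 r3 n ⁻¹' V ∩
          {p | wc p ∈ Set.Ioo s (s + 2 * Real.pi * r3)}) +
        haus (T2R r1 r2 (n+1)) (n+3) (pj r1 r2 r3 n ⁻¹' V ∩ {p | wc p = s}) := by
      rw [← full_meas hr3 (n+3) s V]
      refine (haus_mono _ _ ?_).trans (haus_union_le _ _ _ _)
      intro p hp
      have h2 : wc p ∈ Set.Ico s (s + 2 * Real.pi * r3) := hp.2
      rcases eq_or_lt_of_le h2.1 with heq | hlt'
      · exact Or.inr ⟨hp.1, heq.symm⟩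
      · exact Or.inl ⟨hp.1, hlt', h2.2⟩
    have hv3 : haus (T2R r1 r2 (n+1)) (n+3)
        (pj r1 r2 r3 n ⁻¹' V ∩ {p | wc p = s}) = 0 := by
      refine le_antisymm ?_ zero_le
      have := hwall_le (n+3) s hst V interior_subset
      rw [hslice0] at this
      exact this
    have hv4 : haus (T2R r1 r2 (n+1)) (n+3) (pj r1 r2 r3 n ⁻¹' V ∩
        {p | wc p ∈ Set.Ioo s (s + 2 * Real.pi * r3)}) ≤
        haus (T2R r1 r2 (n+1)) (n+3) U :=
      haus_mono _ _ subset_closure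
    calc v ≤ haus (T3R r1 r2 r3 n) (n+3) V := hv1
      _ ≤ _ + _ := hv2
      _ = haus (T2R r1 r2 (n+1)) (n+3) (pj r1 r2 r3 n ⁻¹' V ∩
          {p | wc p ∈ Set.Ioo s (s + 2 * Real.pi * r3)}) := by rw [hv3, add_zero]
      _ ≤ haus (T2R r1 r2 (n+1)) (n+3) U := hv4
  have hUvol : haus (T2R r1 r2 (n+1)) (n+3) U = v := le_antisymm hUvol_le hUvol_ge
  -- frontier of U
  have hUfr : frontier U ⊆
      (pj r1 r2 r3 n ⁻¹' (frontier Ω) ∩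
        {p | wc p ∈ Set.Icc s (s + 2 * Real.pi * r3)}) ∪
      (pj r1 r2 r3 n ⁻¹' Ω ∩ {p | wc p = s}) ∪
      (pj r1 r2 r3 n ⁻¹' Ω ∩ {p | wc p = s + 2 * Real.pi * r3}) := by
    have hUclosed : IsClosed U := isClosed_closure
    rw [hUclosed.frontier_eq]
    rintro x ⟨hxU, hxint⟩
    have hx1 := hUsub hxU
    have hxOm : pj r1 r2 r3 n x ∈ Ω := hx1.1
    have hxIcc : wc x ∈ Set.Icc s (s + 2 * Real.pi * r3) := hx1.2
    have hnot : ¬(pj r1 r2 r3 n x ∈ V ∧ wc x ∈ Set.Ioo s (s + 2 * Real.pi * r3)) := by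
      intro hcon
      apply hxint
      have hopen : IsOpen (pj r1 r2 r3 n ⁻¹' V ∩
          {p | wc p ∈ Set.Ioo s (s + 2 * Real.pi * r3)}) :=
        (hpjcont.isOpen_preimage _ isOpen_interior).inter
          (cont_wc.isOpen_preimage _ isOpen_Ioo)
      exact interior_mono (subset_closure) (hopen.subset_interior_iff.mpr
        (le_refl _) ⟨hcon.1, hcon.2⟩)
    by_cases hxV : pj r1 r2 r3 n x ∈ V
    · have hxIoo : wc x ∉ Set.Ioo s (s + 2 * Real.pi * r3) := fun hc => hnot ⟨hxV, hc⟩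
      rcases eq_or_lt_of_le hxIcc.1 with heq | hlt'
      · exact Or.inl (Or.inr ⟨hxOm, heq.symm⟩)
      · rcases eq_or_lt_of_le hxIcc.2 with heq2 | hlt2
        · exact Or.inr ⟨hxOm, heq2⟩
        · exact absurd ⟨hlt', hlt2⟩ hxIoo
    · refine Or.inl (Or.inl ⟨?_, hxIcc⟩)
      show pj r1 r2 r3 n x ∈ frontier Ω
      rw [hfrΩ]
      exact ⟨hxOm, hxV⟩
  -- frontier measure bound
  have hfrU_le : haus (T2R r1 r2 (n+1)) (n+2) (frontier U) ≤ B + (δ + δ + δ) := by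
    refine (haus_mono _ _ hUfr).trans ?_
    refine (haus_union_le _ _ _ _).trans ?_
    have hterm3 : haus (T2R r1 r2 (n+1)) (n+2)
        (pj r1 r2 r3 n ⁻¹' Ω ∩ {p | wc p = s + 2 * Real.pi * r3}) ≤ δ :=
      (hwall_le (n+2) _ hsLt Ω le_rfl).trans hslice.le
    refine le_trans (add_le_add (haus_union_le _ _ _ _) hterm3) ?_
    have hterm2 : haus (T2R r1 r2 (n+1)) (n+2)
        (pj r1 r2 r3 n ⁻¹' Ω ∩ {p | wc p = s}) ≤ δ :=
      (hwall_le (n+2) s hst Ω le_rfl).trans hslice.le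
    have hterm1 : haus (T2R r1 r2 (n+1)) (n+2)
        (pj r1 r2 r3 n ⁻¹' (frontier Ω) ∩
          {p | wc p ∈ Set.Icc s (s + 2 * Real.pi * r3)}) ≤ B + δ := by
      have hsplit : (pj r1 r2 r3 n ⁻¹' (frontier Ω) ∩
          {p | wc p ∈ Set.Icc s (s + 2 * Real.pi * r3)}) ⊆
          (pj r1 r2 r3 n ⁻¹' (frontier Ω) ∩
            {p | wc p ∈ Set.Ico s (s + 2 * Real.pi * r3)}) ∪
          (pj r1 r2 r3 n ⁻¹' (frontier Ω) ∩ {p | wc p = s + 2 * Real.pi * r3}) := by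
        intro p hp
        have h2 : wc p ∈ Set.Icc s (s + 2 * Real.pi * r3) := hp.2
        rcases eq_or_lt_of_le h2.2 with heq | hlt'
        · exact Or.inr ⟨hp.1, heq⟩
        · exact Or.inl ⟨hp.1, h2.1, hlt'⟩
      refine (haus_mono _ _ hsplit).trans ((haus_union_le _ _ _ _).trans ?_)
      rw [full_meas hr3 (n+2) s (frontier Ω), ← hBdef]
      refine add_le_add le_rfl ?_
      exact (hwall_le (n+2) _ hsLt (frontier Ω) hΩclosed.frontier_subset).trans hslice.le
    calc haus (T2R r1 r2 (n+1)) (n+2) _ + haus (T2R r1 r2 (n+1)) (n+2) _ + δ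
        ≤ (B + δ) + δ + δ := add_le_add (add_le_add hterm1 hterm2) le_rfl
      _ = B + (δ + δ + δ) := by ring
  -- conclude via the isoperimetric profile
  have hprof : isoProfile (T2R r1 r2 (n+1)) (n+3) v ≤
      haus (T2R r1 r2 (n+1)) (n+2) (frontier U) := by
    unfold isoProfile
    exact iInf₂_le U ⟨hUregion, hUvol⟩
  refine hprof.trans (hfrU_le.trans ?_)
  rw [hδ3]

end
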